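/- In any nilpotent group G of class at most 4, for all x, y ∈ G the identity (xy)⁴ = x⁴y⁴(y,x)⁶((y,x),y)¹⁴(((y,x),y),y)¹¹((y,x),x)⁴(((y,x),x),y)¹¹(((y,x),x),x) holds. -/

import Mathlib

/-- The commutator `(a,b) = a⁻¹ * b⁻¹ * a * b` used in the paper. -/
def paperComm {G : Type*} [Group G] (a b : G) : G := a⁻¹ * b⁻¹ * a * b

open scoped commutatorElement

private lemma paperComm_eq {G : Type*} [Group G] (a b : G) :
    paperComm a b = ⁅a⁻¹, b⁻¹⁆ := by
  simp [paperComm, commutatorElement_def]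

private lemma paperComm_mem {G : Type*} [Group G] {n : ℕ} {a : G}
    (ha : a ∈ (⊤ : Subgroup G).lowerCentralSeries n) (b : G) :
    paperComm a b ∈ (⊤ : Subgroup G).lowerCentralSeries (n + 1) := by
  rw [paperComm_eq,
    show (⊤ : Subgroup G).lowerCentralSeries (n+1) = ⁅(⊤ : Subgroup G).lowerCentralSeries n, (⊤ : Subgroup G)⁆ from rfl]
  exact Subgroup.commutator_mem_commutator (inv_mem ha) (Subgroup.mem_top _)

private lemma tail_ext {G : Type*} [Group G] {a b p q r : G} (h : a * b = p * (q * r)) (t : G) :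
    a * (b * t) = p * (q * (r * t)) := by
  rw [← mul_assoc, h, mul_assoc, mul_assoc]

private lemma tail_comm {G : Type*} [Group G] {a b : G} (h : a * b = b * a) (t : G) :
    a * (b * t) = b * (a * t) := by
  rw [← mul_assoc, h, mul_assoc]

/-- The collection formula for fourth powers in a nilpotent group of class at most 4. -/
theorem collect_formula {G : Type*} [Group G]
    (hnil : (⊤ : Subgroup G).lowerCentralSeries 4 = ⊥) (x y : G) :
    (x * y) ^ 4 =
      x ^ 4 * y ^ 4 * (paperComm y x) ^ 6 *
        (paperComm (paperComm y x) y) ^ 14 *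
        (paperComm (paperComm (paperComm y x) y) y) ^ 11 *
        (paperComm (paperComm y x) x) ^ 4 *
        (paperComm (paperComm (paperComm y x) x) y) ^ 11 *
        (paperComm (paperComm (paperComm y x) x) x) := by
  -- abbreviations
  set c := paperComm y x with hcdef
  set u := paperComm c x with hudef
  set v := paperComm c y with hvdef
  set e1 := paperComm u x with he1def
  set e2 := paperComm u y with he2def
  set e3 := paperComm v y with he3def
  set e4 := paperComm v x with he4def
  -- memberships in the lower central series
  have m0 : ∀ g : G, g ∈ (⊤ : Subgroup G).lowerCentralSeries 0 := fun g => Subgroup.mem_top g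
  have hc1 : c ∈ (⊤ : Subgroup G).lowerCentralSeries 1 := paperComm_mem (m0 y) x
  have hu2 : u ∈ (⊤ : Subgroup G).lowerCentralSeries 2 := paperComm_mem hc1 x
  have hv2 : v ∈ (⊤ : Subgroup G).lowerCentralSeries 2 := paperComm_mem hc1 y
  have he13 : e1 ∈ (⊤ : Subgroup G).lowerCentralSeries 3 := paperComm_mem hu2 x
  have he23 : e2 ∈ (⊤ : Subgroup G).lowerCentralSeries 3 := paperComm_mem hu2 y
  have he33 : e3 ∈ (⊤ : Subgroup G).lowerCentralSeries 3 := paperComm_mem hv2 y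
  have he43 : e4 ∈ (⊤ : Subgroup G).lowerCentralSeries 3 := paperComm_mem hv2 x
  -- weight-4 elements are central
  have central : ∀ g ∈ (⊤ : Subgroup G).lowerCentralSeries 3, ∀ z : G, g * z = z * g := by
    intro g hg z
    have h1 : paperComm g z ∈ (⊤ : Subgroup G).lowerCentralSeries 4 := paperComm_mem hg z
    rw [hnil, Subgroup.mem_bot, paperComm] at h1
    have := congrArg (fun t => z * g * t) h1
    simpa [mul_assoc] using this
  -- γ₂ commutes with γ₁ elementwise (three subgroups lemma)
  have hbot21 : ⁅(⊤ : Subgroup G).lowerCentralSeries 2, (⊤ : Subgroup G).lowerCentralSeries 1⁆ = ⊥ := by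
    rw [Subgroup.commutator_comm,
      show (⊤ : Subgroup G).lowerCentralSeries 1 = ⁅(⊤ : Subgroup G), (⊤ : Subgroup G)⁆ from rfl]
    apply Subgroup.commutator_commutator_eq_bot_of_rotate
    · rw [Subgroup.commutator_comm (⊤ : Subgroup G)]
      rw [show ⁅(⊤ : Subgroup G).lowerCentralSeries 2, (⊤ : Subgroup G)⁆ = (⊤ : Subgroup G).lowerCentralSeries 3 from rfl]
      rw [show ⁅(⊤ : Subgroup G).lowerCentralSeries 3, (⊤ : Subgroup G)⁆ = (⊤ : Subgroup G).lowerCentralSeries 4 from rfl]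
      exact hnil
    · rw [show ⁅(⊤ : Subgroup G).lowerCentralSeries 2, (⊤ : Subgroup G)⁆ = (⊤ : Subgroup G).lowerCentralSeries 3 from rfl]
      rw [show ⁅(⊤ : Subgroup G).lowerCentralSeries 3, (⊤ : Subgroup G)⁆ = (⊤ : Subgroup G).lowerCentralSeries 4 from rfl]
      exact hnil
  have comm21 : ∀ g ∈ (⊤ : Subgroup G).lowerCentralSeries 2, ∀ h ∈ (⊤ : Subgroup G).lowerCentralSeries 1, g * h = h * g := by
    intro g hg h hh
    have h1 : paperComm g h ∈ (⊥ : Subgroup G) := by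
      rw [← hbot21, paperComm_eq]
      exact Subgroup.commutator_mem_commutator (inv_mem hg) (inv_mem hh)
    rw [Subgroup.mem_bot, paperComm] at h1
    have := congrArg (fun t => h * g * t) h1
    simpa [mul_assoc] using this
  -- basic swap relations
  have ryx : y * x = x * (y * c) := by rw [hcdef, paperComm]; group
  have rcx : c * x = x * (c * u) := by rw [hudef, paperComm]; group
  have rcy : c * y = y * (c * v) := by rw [hvdef, paperComm]; group
  have rux : u * x = x * (u * e1) := by rw [he1def, paperComm]; group
  have ruy : u * y = y * (u * e2) := by rw [he2def, paperComm]; group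
  have rvy : v * y = y * (v * e3) := by rw [he3def, paperComm]; group
  have rvx4 : v * x = x * (v * e4) := by rw [he4def, paperComm]; group
  -- commuting relations
  have hvc : v * c = c * v := comm21 v hv2 c hc1
  have huc : u * c = c * u := comm21 u hu2 c hc1
  have hv1 : v ∈ (⊤ : Subgroup G).lowerCentralSeries 1 := paperComm_mem (m0 c) y
  have huv : u * v = v * u := comm21 u hu2 v hv1
  have ce1 : ∀ z : G, e1 * z = z * e1 := central e1 he13
  have ce2 : ∀ z : G, e2 * z = z * e2 := central e2 he23
  have ce3 : ∀ z : G, e3 * z = z * e3 := central e3 he33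
  have ce4 : ∀ z : G, e4 * z = z * e4 := central e4 he43
  -- e4 = e2 via the two collections of c * (y * x)
  have h1 : c * (y * x) = x * (y * (c * (c * (v * (u * e4))))) := by
    rw [← mul_assoc, rcy, mul_assoc, mul_assoc, rvx4, tail_ext rcx, tail_ext ryx,
      tail_comm huv]
  have h2 : c * (y * x) = x * (y * (c * (c * (v * (u * e2))))) := by
    rw [ryx, tail_ext rcx, tail_ext ruy, tail_ext rcy, ce2 c,
      tail_comm huc, tail_comm hvc]
  have he42 : e4 = e2 := by
    have h12 := h1.symm.trans h2
    simpa only [mul_right_inj] using h12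
  have rvx : v * x = x * (v * e2) := by rw [← he42]; exact rvx4
  -- expand powers and right-associate
  simp only [show (14:ℕ)=13+1 from rfl, show (13:ℕ)=12+1 from rfl, show (12:ℕ)=11+1 from rfl,
    show (11:ℕ)=10+1 from rfl, show (10:ℕ)=9+1 from rfl, show (9:ℕ)=8+1 from rfl,
    show (8:ℕ)=7+1 from rfl, show (7:ℕ)=6+1 from rfl, show (6:ℕ)=5+1 from rfl,
    show (5:ℕ)=4+1 from rfl, show (4:ℕ)=3+1 from rfl, show (3:ℕ)=2+1 from rfl,
    show (2:ℕ)=1+1 from rfl, pow_succ, pow_zero, pow_one, one_mul, mul_assoc]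
  -- collect
  simp only [ryx, rcx, rcy, rux, ruy, rvy, rvx, tail_ext ryx, tail_ext rcx, tail_ext rcy,
    tail_ext rux, tail_ext ruy, tail_ext rvy, tail_ext rvx,
    hvc, huc, huv, tail_comm hvc, tail_comm huc, tail_comm huv,
    ce1 x, ce1 y, ce1 c, ce1 v, ce1 u, ce2 x, ce2 y, ce2 c, ce2 v, ce2 u,
    ce3 x, ce3 y, ce3 c, ce3 v, ce3 u,
    tail_comm (ce1 x), tail_comm (ce1 y), tail_comm (ce1 c), tail_comm (ce1 v), tail_comm (ce1 u),
    tail_comm (ce2 x), tail_comm (ce2 y), tail_comm (ce2 c), tail_comm (ce2 v), tail_comm (ce2 u),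
    tail_comm (ce3 x), tail_comm (ce3 y), tail_comm (ce3 c), tail_comm (ce3 v), tail_comm (ce3 u),
    ce1 e3, ce1 e2, ce2 e3, tail_comm (ce1 e3), tail_comm (ce1 e2), tail_comm (ce2 e3)]
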